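/- The group G acts transitively on F, and hence also transitively on the 63-element quotient set F̄ = F/⟨ι⟩. -/

import Mathlib

/-- The lattice ℤ⁸. -/
abbrev V : Type := Fin 8 → ℤ

/-- The bilinear form with Gram matrix diag(1,−1,…,−1). -/
def B (v w : V) : ℤ := v 0 * w 0 - ∑ i : Fin 7, v i.succ * w i.succ

/-- The class h = (3,−1,…,−1) with ⟨h,h⟩ = 2. -/
def hh : V := ![3, -1, -1, -1, -1, -1, -1, -1]

/-- The involution ι(v) = ⟨v,h⟩·h − v. -/
def iota (v : V) : V := B v hh • hh - v

/-- L = {v : ⟨v,v⟩ = −1, ⟨v,h⟩ = 1}. -/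
def L : Set V := {v | B v v = -1 ∧ B v hh = 1}

/-- F = {v : ⟨v,v⟩ = 0, ⟨v,h⟩ = 2}. -/
def F : Set V := {v | B v v = 0 ∧ B v hh = 2}

/-- L̄ = L/⟨ι⟩, realized as the set of ι-orbits. -/
def Lbar : Set (Set V) := {p | ∃ v ∈ L, p = {v, iota v}}

/-- F̄ = F/⟨ι⟩, realized as the set of ι-orbits. -/
def Fbar : Set (Set V) := {p | ∃ v ∈ F, p = {v, iota v}}

/-- G = {g ∈ GL₈(ℤ) : g preserves B and g(h) = h}. -/
def G : Subgroup (V ≃ₗ[ℤ] V) where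
  carrier := {g | (∀ v w : V, B (g v) (g w) = B v w) ∧ g hh = hh}
  one_mem' := ⟨fun _ _ => rfl, rfl⟩
  mul_mem' := by
    rintro a b ⟨ha1, ha2⟩ ⟨hb1, hb2⟩
    refine ⟨fun v w => ?_, ?_⟩
    · show B (a (b v)) (a (b w)) = B v w
      rw [ha1, hb1]
    · show a (b hh) = hh
      rw [hb2, ha2]
  inv_mem' := by
    rintro a ⟨ha1, ha2⟩
    refine ⟨fun v w => ?_, ?_⟩
    · show B (a.symm v) (a.symm w) = B v w
      conv_rhs => rw [← a.apply_symm_apply v, ← a.apply_symm_apply w]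
      rw [ha1]
    · show a.symm hh = hh
      conv_lhs => rw [← ha2]
      exact a.symm_apply_apply hh

section Aux

lemma Bexp (v w : V) : B v w = v 0 * w 0 - (v 1 * w 1 + v 2 * w 2 + v 3 * w 3 + v 4 * w 4 + v 5 * w 5 + v 6 * w 6 + v 7 * w 7) := by
  simp [B, Fin.sum_univ_seven]

@[simp] lemma hh0 : hh 0 = 3 := rfl
@[simp] lemma hh1 : hh 1 = -1 := rfl
@[simp] lemma hh2 : hh 2 = -1 := rfl
@[simp] lemma hh3 : hh 3 = -1 := rfl
@[simp] lemma hh4 : hh 4 = -1 := rfl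
@[simp] lemma hh5 : hh 5 = -1 := rfl
@[simp] lemma hh6 : hh 6 = -1 := rfl
@[simp] lemma hh7 : hh 7 = -1 := rfl

lemma B_hh (v : V) : B v hh = 3 * v 0 + (v 1 + v 2 + v 3 + v 4 + v 5 + v 6 + v 7) := by
  rw [Bexp]; simp only [hh0, hh1, hh2, hh3, hh4, hh5, hh6, hh7]; ring

/- permutations of the last 7 coordinates -/
def perm8 (σ : Equiv.Perm (Fin 7)) : Equiv.Perm (Fin 8) :=
  (finSuccEquiv 7).trans ((σ.optionCongr).trans (finSuccEquiv 7).symm)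

lemma perm8_zero (σ : Equiv.Perm (Fin 7)) : perm8 σ 0 = 0 := by
  simp [perm8]
lemma perm8_succ (σ : Equiv.Perm (Fin 7)) (i : Fin 7) : perm8 σ i.succ = (σ i).succ := by
  simp [perm8, finSuccEquiv_succ, finSuccEquiv_symm_some]

def P (σ : Equiv.Perm (Fin 7)) : V ≃ₗ[ℤ] V := LinearEquiv.funCongrLeft ℤ ℤ (perm8 σ)

lemma P_apply (σ : Equiv.Perm (Fin 7)) (v : V) (j : Fin 8) : P σ v j = v (perm8 σ j) := rfl

lemma hh_succ (i : Fin 7) : hh i.succ = -1 := by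
  fin_cases i <;> rfl

lemma P_mem (σ : Equiv.Perm (Fin 7)) : P σ ∈ G := by
  constructor
  · intro v w
    show B (v ∘ perm8 σ) (w ∘ perm8 σ) = B v w
    unfold B
    simp only [Function.comp_apply, perm8_zero, perm8_succ]
    congr 1
    exact Equiv.sum_comp σ (fun i => v i.succ * w i.succ)
  · funext j
    rw [P_apply]
    induction j using Fin.cases with
    | zero => rw [perm8_zero]
    | succ i => rw [perm8_succ, hh_succ, hh_succ]

/- the reflection in the root (1,-1,-1,-1,0,0,0,0) -/
def cc : V := ![1, -1, -1, -1, 0, 0, 0, 0]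

@[simp] lemma cc0 : cc 0 = 1 := rfl
@[simp] lemma cc1 : cc 1 = -1 := rfl
@[simp] lemma cc2 : cc 2 = -1 := rfl
@[simp] lemma cc3 : cc 3 = -1 := rfl
@[simp] lemma cc4 : cc 4 = 0 := rfl
@[simp] lemma cc5 : cc 5 = 0 := rfl
@[simp] lemma cc6 : cc 6 = 0 := rfl
@[simp] lemma cc7 : cc 7 = 0 := rfl

lemma B_cc (v : V) : B v cc = v 0 + v 1 + v 2 + v 3 := by
  rw [Bexp]; simp only [cc0, cc1, cc2, cc3, cc4, cc5, cc6, cc7]; ring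

def reflL : V →ₗ[ℤ] V where
  toFun := fun v => v + B v cc • cc
  map_add' := by
    intro v w
    show (v + w) + B (v + w) cc • cc = (v + B v cc • cc) + (w + B w cc • cc)
    have h : B (v + w) cc = B v cc + B w cc := by
      rw [Bexp, Bexp, Bexp]; simp [Pi.add_apply]; ring
    rw [h]; module
  map_smul' := by
    intro a v
    show (a • v) + B (a • v) cc • cc = a • (v + B v cc • cc)
    have h : B (a • v) cc = a * B v cc := by
      rw [Bexp, Bexp]; simp [Pi.smul_apply]; ring
    rw [h]; module

lemma reflL_apply (v : V) (j : Fin 8) : reflL v j = v j + B v cc * cc j := rfl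

lemma reflL_inv : Function.Involutive reflL := by
  intro v
  show reflL v + B (reflL v) cc • cc = v
  have h1 : B (reflL v) cc = - B v cc := by
    rw [B_cc, reflL_apply, reflL_apply, reflL_apply, reflL_apply, B_cc]
    simp only [cc0, cc1, cc2, cc3]; ring
  rw [h1]
  show v + B v cc • cc + _ = v
  module

def reflE : V ≃ₗ[ℤ] V := LinearEquiv.ofInvolutive reflL reflL_inv

lemma reflE_apply (v : V) (j : Fin 8) : reflE v j = v j + B v cc * cc j := rfl

lemma reflE_mem : reflE ∈ G := by
  constructor
  · intro v w
    rw [Bexp]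
    simp only [reflE_apply, B_cc, cc0, cc1, cc2, cc3, cc4, cc5, cc6, cc7]
    rw [Bexp]; ring
  · funext j
    rw [reflE_apply, B_cc]
    show hh j + (3 + -1 + -1 + -1) * cc j = hh j
    ring

/- membership in F is G-invariant -/
lemma g_mem_F {g : V ≃ₗ[ℤ] V} (hg : g ∈ G) {v : V} (hv : v ∈ F) : g v ∈ F := by
  obtain ⟨h1, h2⟩ := hv
  constructor
  · rw [hg.1 v v]; exact h1
  · rw [← hg.2, hg.1 v hh]; exact h2

/- arithmetic lemmas -/
lemma mul_succ_nonneg (y : ℤ) : 0 ≤ y*y + y := by nlinarith [sq_nonneg y, sq_nonneg (y+1)]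

lemma sqvals (y s : ℤ) (hs : s = y*y) (h2 : s + y ≤ 12) :
    (y=-4∧s=16)∨(y=-3∧s=9)∨(y=-2∧s=4)∨(y=-1∧s=1)∨(y=0∧s=0)∨(y=1∧s=1)∨(y=2∧s=4)∨(y=3∧s=9) := by
  subst hs
  have h3 : -4 ≤ y := by nlinarith
  have h4 : y ≤ 3 := by nlinarith
  interval_cases y <;> norm_num

lemma sqchoices (a : ℤ) (h2 : 2 ≤ a) (h5 : a ≤ 5) :
    a*a = 4 ∧ a = 2 ∨ a*a = 9 ∧ a = 3 ∨ a*a = 16 ∧ a = 4 ∨ a*a = 25 ∧ a = 5 := by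
  interval_cases a <;> norm_num

lemma bnds (a x1 x2 x3 x4 x5 x6 x7 : ℤ)
    (hsq : x1*x1+x2*x2+x3*x3+x4*x4+x5*x5+x6*x6+x7*x7 = a*a)
    (hs : x1+x2+x3+x4+x5+x6+x7 = 2 - 3*a) : 1 ≤ a ∧ a ≤ 5 := by
  have cs : (x1+x2+x3+x4+x5+x6+x7)^2 ≤ 7*(x1*x1+x2*x2+x3*x3+x4*x4+x5*x5+x6*x6+x7*x7) := by
    nlinarith [sq_nonneg (x1-x2), sq_nonneg (x1-x3), sq_nonneg (x1-x4), sq_nonneg (x1-x5), sq_nonneg (x1-x6), sq_nonneg (x1-x7), sq_nonneg (x2-x3), sq_nonneg (x2-x4), sq_nonneg (x2-x5), sq_nonneg (x2-x6), sq_nonneg (x2-x7), sq_nonneg (x3-x4), sq_nonneg (x3-x5), sq_nonneg (x3-x6), sq_nonneg (x3-x7), sq_nonneg (x4-x5), sq_nonneg (x4-x6), sq_nonneg (x4-x7), sq_nonneg (x5-x6), sq_nonneg (x5-x7), sq_nonneg (x6-x7)]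
  rw [hsq, hs] at cs
  exact ⟨by nlinarith, by nlinarith⟩

/- bounds for elements of F -/
lemma F_bounds {v : V} (hv : v ∈ F) : 1 ≤ v 0 ∧ v 0 ≤ 5 := by
  obtain ⟨h1, h2⟩ := hv
  rw [Bexp] at h1
  rw [B_hh] at h2
  exact bnds (v 0) (v 1) (v 2) (v 3) (v 4) (v 5) (v 6) (v 7)
    (by linarith) (by linarith)

set_option maxHeartbeats 2000000 in
lemma key (a y0 y1 y2 y3 y4 y5 y6 : ℤ)
    (m01 : y0 ≤ y1) (m12 : y1 ≤ y2) (m23 : y2 ≤ y3) (m34 : y3 ≤ y4) (m45 : y4 ≤ y5) (m56 : y5 ≤ y6)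
    (hsum : y0+y1+y2+y3+y4+y5+y6 = 2 - 3*a)
    (hsq : y0*y0+y1*y1+y2*y2+y3*y3+y4*y4+y5*y5+y6*y6 = a*a)
    (ha : 2 ≤ a) (ha5 : a ≤ 5) : y0 + y1 + y2 ≤ -a - 1 := by
  obtain ⟨s0, hs0⟩ : ∃ s, s = y0*y0 := ⟨_, rfl⟩
  have n0 := mul_succ_nonneg y0; rw [← hs0] at n0
  obtain ⟨s1, hs1⟩ : ∃ s, s = y1*y1 := ⟨_, rfl⟩
  have n1 := mul_succ_nonneg y1; rw [← hs1] at n1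
  obtain ⟨s2, hs2⟩ : ∃ s, s = y2*y2 := ⟨_, rfl⟩
  have n2 := mul_succ_nonneg y2; rw [← hs2] at n2
  obtain ⟨s3, hs3⟩ : ∃ s, s = y3*y3 := ⟨_, rfl⟩
  have n3 := mul_succ_nonneg y3; rw [← hs3] at n3
  obtain ⟨s4, hs4⟩ : ∃ s, s = y4*y4 := ⟨_, rfl⟩
  have n4 := mul_succ_nonneg y4; rw [← hs4] at n4
  obtain ⟨s5, hs5⟩ : ∃ s, s = y5*y5 := ⟨_, rfl⟩
  have n5 := mul_succ_nonneg y5; rw [← hs5] at n5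
  obtain ⟨s6, hs6⟩ : ∃ s, s = y6*y6 := ⟨_, rfl⟩
  have n6 := mul_succ_nonneg y6; rw [← hs6] at n6
  rw [← hs0, ← hs1, ← hs2, ← hs3, ← hs4, ← hs5, ← hs6] at hsq
  have hc := sqchoices a ha ha5
  rcases hc with ⟨h,ha'⟩|⟨h,ha'⟩|⟨h,ha'⟩|⟨h,ha'⟩ <;> rw [h] at hsq <;> subst ha' <;>
    [skip; skip; skip; skip] <;>
    (have d0 := sqvals y0 s0 hs0 (by omega)) <;>
    (have d1 := sqvals y1 s1 hs1 (by omega)) <;>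
    (have d2 := sqvals y2 s2 hs2 (by omega)) <;>
    (have d3 := sqvals y3 s3 hs3 (by omega)) <;>
    (have d4 := sqvals y4 s4 hs4 (by omega)) <;>
    (have d5 := sqvals y5 s5 hs5 (by omega)) <;>
    (have d6 := sqvals y6 s6 hs6 (by omega)) <;>
    (clear hs0 hs1 hs2 hs3 hs4 hs5 hs6) <;> omega

lemma base_case (y0 y1 y2 y3 y4 y5 y6 : ℤ)
    (m01 : y0 ≤ y1) (m12 : y1 ≤ y2) (m23 : y2 ≤ y3) (m34 : y3 ≤ y4) (m45 : y4 ≤ y5) (m56 : y5 ≤ y6)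
    (hsum : y0+y1+y2+y3+y4+y5+y6 = -1)
    (hsq : y0*y0+y1*y1+y2*y2+y3*y3+y4*y4+y5*y5+y6*y6 = 1) :
    y0 = -1 ∧ y1 = 0 ∧ y2 = 0 ∧ y3 = 0 ∧ y4 = 0 ∧ y5 = 0 ∧ y6 = 0 := by
  have n0 := mul_succ_nonneg y0
  have n1 := mul_succ_nonneg y1
  have n2 := mul_succ_nonneg y2
  have n3 := mul_succ_nonneg y3
  have n4 := mul_succ_nonneg y4
  have n5 := mul_succ_nonneg y5
  have n6 := mul_succ_nonneg y6
  have z0 : y0*y0 + y0 = 0 := by linarith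
  have z1 : y1*y1 + y1 = 0 := by linarith
  have z2 : y2*y2 + y2 = 0 := by linarith
  have z3 : y3*y3 + y3 = 0 := by linarith
  have z4 : y4*y4 + y4 = 0 := by linarith
  have z5 : y5*y5 + y5 = 0 := by linarith
  have z6 : y6*y6 + y6 = 0 := by linarith
  have w0 : y0 = 0 ∨ y0 = -1 := by rcases mul_eq_zero.mp (show y0*(y0+1) = 0 by linarith) with h|h <;> omega
  have w1 : y1 = 0 ∨ y1 = -1 := by rcases mul_eq_zero.mp (show y1*(y1+1) = 0 by linarith) with h|h <;> omega
  have w2 : y2 = 0 ∨ y2 = -1 := by rcases mul_eq_zero.mp (show y2*(y2+1) = 0 by linarith) with h|h <;> omega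
  have w3 : y3 = 0 ∨ y3 = -1 := by rcases mul_eq_zero.mp (show y3*(y3+1) = 0 by linarith) with h|h <;> omega
  have w4 : y4 = 0 ∨ y4 = -1 := by rcases mul_eq_zero.mp (show y4*(y4+1) = 0 by linarith) with h|h <;> omega
  have w5 : y5 = 0 ∨ y5 = -1 := by rcases mul_eq_zero.mp (show y5*(y5+1) = 0 by linarith) with h|h <;> omega
  have w6 : y6 = 0 ∨ y6 = -1 := by rcases mul_eq_zero.mp (show y6*(y6+1) = 0 by linarith) with h|h <;> omega
  omega

def base : V := ![1,-1,0,0,0,0,0,0]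

lemma base_mem_F : base ∈ F := by
  exact ⟨by decide, by decide⟩


lemma toBase : ∀ n : ℕ, ∀ v, v ∈ F → v 0 ≤ (n:ℤ) → ∃ g ∈ G, g v = base := by
  intro n
  induction n with
  | zero =>
    intro v hv h0
    have := (F_bounds hv).1
    norm_num at h0
    omega
  | succ n ih =>
    intro v hv h0
    set x : Fin 7 → ℤ := fun i => v i.succ with hx
    set σ := Tuple.sort x with hσ
    have mono := Tuple.monotone_sort x
    set v' := P σ v with hv'def
    have hPmem := P_mem σ
    have hvF' : v' ∈ F := g_mem_F hPmem hv
    have ha0 : v' 0 = v 0 := by rw [hv'def, P_apply, perm8_zero]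
    have coord : ∀ i : Fin 7, v' i.succ = (x ∘ σ) i := fun i => by
      rw [hv'def, P_apply, perm8_succ]; rfl
    have e1 : v' 1 = (x ∘ σ) 0 := coord 0
    have e2 : v' 2 = (x ∘ σ) 1 := coord 1
    have e3 : v' 3 = (x ∘ σ) 2 := coord 2
    have e4 : v' 4 = (x ∘ σ) 3 := coord 3
    have e5 : v' 5 = (x ∘ σ) 4 := coord 4
    have e6 : v' 6 = (x ∘ σ) 5 := coord 5
    have e7 : v' 7 = (x ∘ σ) 6 := coord 6
    have m01 : (x ∘ σ) 0 ≤ (x ∘ σ) 1 := mono (by decide : (0:Fin 7) ≤ 1)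
    have m12 : (x ∘ σ) 1 ≤ (x ∘ σ) 2 := mono (by decide : (1:Fin 7) ≤ 2)
    have m23 : (x ∘ σ) 2 ≤ (x ∘ σ) 3 := mono (by decide : (2:Fin 7) ≤ 3)
    have m34 : (x ∘ σ) 3 ≤ (x ∘ σ) 4 := mono (by decide : (3:Fin 7) ≤ 4)
    have m45 : (x ∘ σ) 4 ≤ (x ∘ σ) 5 := mono (by decide : (4:Fin 7) ≤ 5)
    have m56 : (x ∘ σ) 5 ≤ (x ∘ σ) 6 := mono (by decide : (5:Fin 7) ≤ 6)
    obtain ⟨hBvv, hBvh⟩ := id hvF'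
    rw [Bexp, ha0, e1, e2, e3, e4, e5, e6, e7] at hBvv
    rw [B_hh, ha0, e1, e2, e3, e4, e5, e6, e7] at hBvh
    have hsum : (x∘σ) 0 + (x∘σ) 1 + (x∘σ) 2 + (x∘σ) 3 + (x∘σ) 4 + (x∘σ) 5 + (x∘σ) 6 = 2 - 3 * v 0 := by linarith
    have hsq : (x∘σ) 0 * (x∘σ) 0 + (x∘σ) 1 * (x∘σ) 1 + (x∘σ) 2 * (x∘σ) 2 + (x∘σ) 3 * (x∘σ) 3 + (x∘σ) 4 * (x∘σ) 4 + (x∘σ) 5 * (x∘σ) 5 + (x∘σ) 6 * (x∘σ) 6 = v 0 * v 0 := by linarith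
    have hb := F_bounds hv
    rcases eq_or_lt_of_le hb.1 with heq | hlt
    · -- v 0 = 1, sorted vector is base
      rw [← heq] at hsum hsq
      norm_num at hsum hsq
      obtain ⟨b0,b1,b2,b3,b4,b5,b6⟩ :=
        base_case _ _ _ _ _ _ _ m01 m12 m23 m34 m45 m56 hsum hsq
      refine ⟨P σ, hPmem, ?_⟩
      have hbase : v' = base := by
        funext j
        fin_cases j
        · exact ha0.trans heq.symm
        · exact e1.trans b0
        · exact e2.trans b1
        · exact e3.trans b2
        · exact e4.trans b3
        · exact e5.trans b4
        · exact e6.trans b5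
        · exact e7.trans b6
      exact hbase
    · -- v 0 ≥ 2 : descend
      have hkey := key (v 0) _ _ _ _ _ _ _ m01 m12 m23 m34 m45 m56 hsum hsq hlt hb.2
      have hvF'' : reflE v' ∈ F := g_mem_F reflE_mem hvF'
      have hBc : B v' cc = v 0 + ((x∘σ) 0 + (x∘σ) 1 + (x∘σ) 2) := by
        rw [B_cc, ha0, e1, e2, e3]; ring
      have h0'' : (reflE v') 0 = v 0 + B v' cc := by
        rw [reflE_apply, ha0, cc0]; ring
      have hle : (reflE v') 0 ≤ (n:ℤ) := by
        rw [h0'', hBc]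
        push_cast at h0
        omega
      obtain ⟨g0, hg0, hg0b⟩ := ih (reflE v') hvF'' hle
      refine ⟨g0 * reflE * P σ, mul_mem (mul_mem hg0 reflE_mem) hPmem, ?_⟩
      show g0 (reflE (P σ v)) = base
      rw [← hv'def]
      exact hg0b

lemma transF : ∀ v ∈ F, ∀ w ∈ F, ∃ g ∈ G, g v = w := by
  intro v hv w hw
  obtain ⟨gv, hgv, hgvb⟩ := toBase 5 v hv (by exact_mod_cast (F_bounds hv).2)
  obtain ⟨gw, hgw, hgwb⟩ := toBase 5 w hw (by exact_mod_cast (F_bounds hw).2)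
  refine ⟨gw⁻¹ * gv, mul_mem (inv_mem hgw) hgv, ?_⟩
  show gw.symm (gv v) = w
  rw [hgvb, ← hgwb]
  exact gw.symm_apply_apply w

end Aux

/-- G acts transitively on F, hence also on the quotient F̄. -/
theorem stmt10 :
    (∀ v ∈ F, ∀ w ∈ F, ∃ g ∈ G, g v = w) ∧
    (∀ p ∈ Fbar, ∀ q ∈ Fbar, ∃ g ∈ G, (fun x => g x) '' p = q) := by

  refine ⟨transF, ?_⟩
  rintro p ⟨v, hv, rfl⟩ q ⟨w, hw, rfl⟩
  obtain ⟨g, hg, hgv⟩ := transF v hv w hw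
  refine ⟨g, hg, ?_⟩
  have hiota : g (iota v) = iota w := by
    unfold iota
    rw [map_sub, map_smul, hg.2, hgv, ← hgv, ← hg.2, hg.1 v hh, hg.2, hgv]
  rw [Set.image_pair, hgv, hiota]
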